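/- Let 𝒦 and ℒ be complete DFAs with state sets Q_K, Q_L, initial states q_K = 1 ∈ Q_K and q_L = 1 ∈ Q_L, and let 𝒩 be the shuffle NFA on Q_K × Q_L with initial state (1,1). Then every subset S ⊆ Q_K × Q_L reachable from {(1,1)} in the subset automaton of 𝒩 satisfies Condition (C): there exist states (s,1) ∈ S and (1,t) ∈ S for some s ∈ Q_K and t ∈ Q_L. -/

import Mathlib

/-- `IsShuffleOf u v w` means that the word `w` is a shuffle (interleaving)
of the words `u` and `v`. -/
inductive IsShuffleOf {α : Type*} : List α → List α → List α → Prop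
  | nil : IsShuffleOf [] [] []
  | left {a : α} {u v w : List α} : IsShuffleOf u v w → IsShuffleOf (a :: u) v (a :: w)
  | right {a : α} {u v w : List α} : IsShuffleOf u v w → IsShuffleOf u (a :: v) (a :: w)

/-- The shuffle `K ⧢ L` of two languages. -/
def shuffleLang {α : Type*} (K L : Language α) : Language α :=
  {w | ∃ u ∈ K, ∃ v ∈ L, IsShuffleOf u v w}

/-- The shuffle NFA `𝒩` built from two complete DFAs `𝒦` and `ℒ`. -/
def shuffleNFA {α σK σL : Type*} (K : DFA α σK) (L : DFA α σL) : NFA α (σK × σL) where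
  step := fun pq a => {(K.step pq.1 a, pq.2), (pq.1, L.step pq.2 a)}
  start := {(K.start, L.start)}
  accept := {pq | pq.1 ∈ K.accept ∧ pq.2 ∈ L.accept}

/-- `IsStateComplexity L m` says the minimal complete DFA recognizing `L`
has exactly `m` states. -/
def IsStateComplexity {α : Type*} (L : Language α) (m : ℕ) : Prop :=
  (∃ (σ : Type) (_ : Fintype σ) (M : DFA α σ), M.accepts = L ∧ Fintype.card σ = m) ∧
  (∀ (σ : Type) (_ : Fintype σ) (M : DFA α σ), M.accepts = L → m ≤ Fintype.card σ)

/-- Every subset reachable from `{(q_K, q_L)}` in the subset automaton of the shuffle NFA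
contains a state in column 1 (some `(s, q_L)`) and a state in row 1 (some `(q_K, t)`). -/
theorem stmt_2 {α σK σL : Type*} (K : DFA α σK) (L : DFA α σL)
    (S : Set (σK × σL)) (w : List α)
    (hS : S = (shuffleNFA K L).evalFrom {(K.start, L.start)} w) :
    (∃ s : σK, (s, L.start) ∈ S) ∧ (∃ t : σL, (K.start, t) ∈ S) := by
  subst hS
  induction w using List.reverseRecOn with
  | nil => exact ⟨⟨K.start, rfl⟩, ⟨L.start, rfl⟩⟩
  | append_singleton w a ih =>
    obtain ⟨⟨s, hs⟩, ⟨t, ht⟩⟩ := ih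
    rw [NFA.evalFrom_append, NFA.evalFrom_singleton]
    constructor
    · exact ⟨K.step s a, Set.mem_iUnion₂.2 ⟨(s, L.start), hs, Or.inl rfl⟩⟩
    · exact ⟨L.step t a, Set.mem_iUnion₂.2 ⟨(K.start, t), ht, Or.inr rfl⟩⟩
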